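/- (Imaginary-axis stability of relaxed methods.) Let p ≥ 2, let s ≥ p, and let α₁,…,α_s be real coefficients with α_k = 1/k! for 1 ≤ k ≤ p (the stability polynomial of a method of order at least p). For every γ with 0 ≤ γ < 1 there exists ε > 0 such that |R_γ(iy)| ≤ 1 for all real y with |y| ≤ ε; i.e., the relaxed stability region contains a segment of the imaginary axis containing z = 0. -/

import Mathlib

open Complex Finset

noncomputable def Tfun (s : ℕ) (α : ℕ → ℝ) (y : ℝ) : ℂ :=
  ∑ k ∈ Finset.Icc 2 s, (α k : ℂ) * Complex.I ^ k * (y : ℂ) ^ (k - 2)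

lemma Tfun_cont (s : ℕ) (α : ℕ → ℝ) : Continuous (Tfun s α) := by
  unfold Tfun
  refine continuous_finset_sum _ (fun k _ => ?_)
  exact continuous_const.mul (Complex.continuous_ofReal.pow _)

lemma Tfun_zero (s : ℕ) (α : ℕ → ℝ) (hs : 2 ≤ s) : Tfun s α 0 = -(α 2 : ℂ) := by
  unfold Tfun
  rw [Finset.sum_eq_single 2]
  · simp [Complex.I_sq]
  · intro k hk hne
    have : k - 2 ≠ 0 := by simp at hk; omega
    simp [this]
  · intro h
    exact absurd (Finset.mem_Icc.mpr ⟨le_refl 2, hs⟩) h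

lemma sum_split (s : ℕ) (α : ℕ → ℝ) (hs : 2 ≤ s) (hα1 : α 1 = 1) (y : ℝ) :
    ∑ k ∈ Finset.Icc 1 s, (α k : ℂ) * (Complex.I * (y : ℂ)) ^ k
      = (y : ℂ) * (Complex.I + (y : ℂ) * Tfun s α y) := by
  have hins : Finset.Icc 1 s = insert 1 (Finset.Icc 2 s) := by
    ext k; simp [Finset.mem_Icc]; omega
  rw [hins, Finset.sum_insert (by simp)]
  have : ∀ k ∈ Finset.Icc 2 s, (α k : ℂ) * (Complex.I * (y : ℂ)) ^ k
      = ((α k : ℂ) * Complex.I ^ k * (y : ℂ) ^ (k - 2)) * (y:ℂ)^2 := by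
    intro k hk
    have hk2 : 2 ≤ k := (Finset.mem_Icc.mp hk).1
    rw [mul_pow]
    have : (y:ℂ)^k = (y:ℂ)^(k-2) * (y:ℂ)^2 := by
      rw [← pow_add]; congr 1; omega
    rw [this]; ring
  rw [Finset.sum_congr rfl this, ← Finset.sum_mul]
  unfold Tfun
  rw [hα1]
  push_cast
  ring

/-- imaginary-axis stability of relaxed methods.  Let `p ≥ 2`,
`s ≥ p`, and let `α₁, …, α_s` be real coefficients with `α_k = 1/k!` for `1 ≤ k ≤ p`
(the stability polynomial `R_γ(z) = 1 + γ ∑_{k=1}^s α_k z^k` of a method of order at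
least `p`).  For every `γ` with `0 ≤ γ < 1` there exists `ε > 0` such that
`|R_γ(iy)| ≤ 1` for all real `y` with `|y| ≤ ε`; i.e. the relaxed stability region
contains a segment of the imaginary axis containing `z = 0`. -/
theorem rrk_imaginary_axis_stability
    {s p : ℕ} (hp : 2 ≤ p) (hsp : p ≤ s)
    (α : ℕ → ℝ) (hα : ∀ k, 1 ≤ k → k ≤ p → α k = ((Nat.factorial k : ℝ))⁻¹)
    (γ : ℝ) (hγ0 : 0 ≤ γ) (hγ1 : γ < 1) :
    ∃ ε : ℝ, 0 < ε ∧ ∀ y : ℝ, |y| ≤ ε →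
      ‖1 + (γ : ℂ) *
        ∑ k ∈ Finset.Icc 1 s, (α k : ℂ) * (Complex.I * (y : ℂ)) ^ k‖ ≤ 1 := by
  have hs2 : 2 ≤ s := le_trans hp hsp
  have hα1 : α 1 = 1 := by simpa using hα 1 le_rfl (by omega)
  have hα2 : α 2 = 1/2 := by
    rw [hα 2 (by omega) hp]; norm_num [Nat.factorial]
  -- define h
  set T := Tfun s α with hT
  set h : ℝ → ℝ := fun y => 2 * γ * (T y).re + γ ^ 2 * Complex.normSq (Complex.I + (y:ℂ) * T y) with hh
  have key : ∀ y : ℝ, Complex.normSq (1 + (γ : ℂ) *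
      ∑ k ∈ Finset.Icc 1 s, (α k : ℂ) * (Complex.I * (y : ℂ)) ^ k) = 1 + y ^ 2 * h y := by
    intro y
    rw [sum_split s α hs2 hα1 y]
    set w : ℂ := Complex.I + (y:ℂ) * T y with hw
    have : (1 : ℂ) + (γ:ℂ) * ((y:ℂ) * w) = 1 + ((γ * y : ℝ) : ℂ) * w := by push_cast; ring
    rw [this, Complex.normSq_add]
    simp [Complex.normSq_mul, Complex.normSq_ofReal, hw, hh]
    ring_nf
  have hT0 : (T 0).re = -(1/2) := by
    rw [hT, Tfun_zero s α hs2, hα2]; simp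
  have hh0 : h 0 = γ ^ 2 - γ := by
    simp [hh, hT0]
    ring_nf
  -- main: find ε with h y ≤ 0 nearby
  have hfinal : ∃ ε : ℝ, 0 < ε ∧ ∀ y : ℝ, |y| ≤ ε → h y ≤ 0 := by
    rcases eq_or_lt_of_le hγ0 with hγ | hγ
    · refine ⟨1, one_pos, fun y _ => ?_⟩
      simp [hh, ← hγ]
    · have hneg : h 0 < 0 := by
        rw [hh0]; nlinarith
      have hcont : Continuous h := by
        refine Continuous.add ?_ ?_
        · exact continuous_const.mul (Complex.continuous_re.comp (Tfun_cont s α))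
        · exact continuous_const.mul (Complex.continuous_normSq.comp
            (continuous_const.add (Complex.continuous_ofReal.mul (Tfun_cont s α))))
      have hev : ∀ᶠ y in nhds (0:ℝ), h y < 0 :=
        hcont.continuousAt.eventually_lt_const hneg
      rcases Metric.eventually_nhds_iff.mp hev with ⟨ε, hε, hb⟩
      refine ⟨ε/2, by linarith, fun y hy => ?_⟩
      have : dist y 0 < ε := by
        rw [Real.dist_eq, sub_zero]; linarith
      exact le_of_lt (hb this)
  rcases hfinal with ⟨ε, hε, hb⟩
  refine ⟨ε, hε, fun y hy => ?_⟩
  have h1 : Complex.normSq (1 + (γ : ℂ) *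
      ∑ k ∈ Finset.Icc 1 s, (α k : ℂ) * (Complex.I * (y : ℂ)) ^ k) ≤ 1 := by
    rw [key y]
    nlinarith [hb y hy, sq_nonneg y]
  have := Complex.sq_norm (1 + (γ : ℂ) *
      ∑ k ∈ Finset.Icc 1 s, (α k : ℂ) * (Complex.I * (y : ℂ)) ^ k)
  nlinarith [norm_nonneg (1 + (γ : ℂ) *
      ∑ k ∈ Finset.Icc 1 s, (α k : ℂ) * (Complex.I * (y : ℂ)) ^ k)]
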